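/- arXiv:1709.07195 — 2 statements merged into one kernel-verified Lean document; each statement's English description precedes it below -/
import Mathlib

section
/- Let f, g ∈ S₀(ℝⁿ) be nonnegative functions and let h = f∗g be their convolution. Then for all t > 0, h**(t) ≤ t f**(t) g**(t) + ∫_t^∞ f*(u) g*(u) du. -/
open MeasureTheory Set ENNReal

/-- The class `S₀(ℝⁿ)`. -/
def MemS0 {n : ℕ} (f : EuclideanSpace ℝ (Fin n) → ℝ) : Prop :=
  Measurable f ∧ ∀ y : ℝ, 0 < y → volume {x | y < |f x|} < ⊤

/-- The nonincreasing rearrangement `f*(t) = inf{y > 0 : λ_f(y) < t}`. -/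
noncomputable def rearr {n : ℕ} (f : EuclideanSpace ℝ (Fin n) → ℝ) (t : ℝ) : ℝ :=
  sInf {y : ℝ | 0 < y ∧ volume {x | y < |f x|} < ENNReal.ofReal t}

/-- The maximal rearrangement `f**(t) = (1/t)∫₀^t f*(u) du` (in the extended reals). -/
noncomputable def rearr2 {n : ℕ} (f : EuclideanSpace ℝ (Fin n) → ℝ) (t : ℝ) : ℝ≥0∞ :=
  (ENNReal.ofReal t)⁻¹ * ∫⁻ u in Ioc (0:ℝ) t, ENNReal.ofReal (rearr f u)

namespace ONeilAux

variable {n : ℕ}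

/-- distribution function -/
noncomputable def dd (f : EuclideanSpace ℝ (Fin n) → ℝ) (y : ℝ) : ℝ≥0∞ :=
  volume {x | y < |f x|}

/-- the set whose inf is the rearrangement -/
def SS (f : EuclideanSpace ℝ (Fin n) → ℝ) (u : ℝ) : Set ℝ :=
  {y : ℝ | 0 < y ∧ dd f y < ENNReal.ofReal u}

lemma rearr_eq (f : EuclideanSpace ℝ (Fin n) → ℝ) (u : ℝ) : rearr f u = sInf (SS f u) := rfl

lemma dd_antitone (f : EuclideanSpace ℝ (Fin n) → ℝ) : Antitone (dd f) := by
  intro y z hyz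
  exact measure_mono fun x hx => lt_of_le_of_lt hyz hx

lemma dd_measurable (f : EuclideanSpace ℝ (Fin n) → ℝ) : Measurable (dd f) :=
  (dd_antitone f).measurable

lemma SS_mono (f : EuclideanSpace ℝ (Fin n) → ℝ) {u v : ℝ} (huv : u ≤ v) :
    SS f u ⊆ SS f v := fun y hy => ⟨hy.1, hy.2.trans_le (ofReal_le_ofReal huv)⟩

lemma rearr_nonneg (f : EuclideanSpace ℝ (Fin n) → ℝ) (u : ℝ) : 0 ≤ rearr f u :=
  Real.sInf_nonneg fun _ hy => hy.1.le

lemma rearr_le_of_mem {f : EuclideanSpace ℝ (Fin n) → ℝ} {u y : ℝ} (hy : y ∈ SS f u) :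
    rearr f u ≤ y := csInf_le ⟨0, fun _ hs => hs.1.le⟩ hy

lemma le_rearr_of_dd {f : EuclideanSpace ℝ (Fin n) → ℝ} {u y : ℝ}
    (hne : (SS f u).Nonempty) (h : ENNReal.ofReal u ≤ dd f y) : y ≤ rearr f u := by
  apply le_csInf hne
  intro s hs
  by_contra hlt
  push_neg at hlt
  exact absurd (h.trans (dd_antitone f hlt.le)) (not_le.2 hs.2)

lemma ofReal_le_dd_of_lt_rearr {f : EuclideanSpace ℝ (Fin n) → ℝ} {u y : ℝ}
    (hy : 0 < y) (hlt : y < rearr f u) : ENNReal.ofReal u ≤ dd f y := by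
  by_contra hc
  push_neg at hc
  exact absurd (rearr_le_of_mem ⟨hy, hc⟩) (not_le.2 hlt)

lemma SS_nonempty {f : EuclideanSpace ℝ (Fin n) → ℝ} (hf : MemS0 f) {u : ℝ} (hu : 0 < u) :
    (SS f u).Nonempty := by
  have hmble : ∀ c : ℝ, MeasurableSet {x : EuclideanSpace ℝ (Fin n) | c < |f x|} := by
    intro c
    exact measurableSet_lt measurable_const hf.1.abs
  have hmono : ∀ {k l : ℕ}, k ≤ l →
      {x : EuclideanSpace ℝ (Fin n) | ((l:ℝ)+1) < |f x|} ⊆ {x | ((k:ℝ)+1) < |f x|} := by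
    intro k l hkl x hx
    have : ((k:ℝ)+1) ≤ ((l:ℝ)+1) := by exact_mod_cast by omega
    exact lt_of_le_of_lt this hx
  have hempty : (⋂ k : ℕ, {x : EuclideanSpace ℝ (Fin n) | ((k:ℝ)+1) < |f x|}) = ∅ := by
    ext x
    simp only [mem_iInter, mem_setOf_eq, mem_empty_iff_false, iff_false]
    push_neg
    obtain ⟨k, hk⟩ := exists_nat_gt |f x|
    exact ⟨k, by linarith⟩
  have hinf : (⨅ k : ℕ, dd f ((k:ℝ)+1)) = 0 := by
    simp only [dd]
    have := Directed.measure_iInter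
      (μ := (volume : Measure (EuclideanSpace ℝ (Fin n))))
      (s := fun k : ℕ => {x | ((k:ℝ)+1) < |f x|})
      (fun k => (hmble _).nullMeasurableSet)
      (by
        intro k l
        exact ⟨max k l, hmono (le_max_left _ _), hmono (le_max_right _ _)⟩)
      ⟨0, by simpa using (hf.2 1 one_pos).ne⟩
    rw [← this, hempty, measure_empty]
  have : (⨅ k : ℕ, dd f ((k:ℝ)+1)) < ENNReal.ofReal u := by
    rw [hinf]; exact ofReal_pos.2 hu
  obtain ⟨k, hk⟩ := iInf_lt_iff.1 this
  exact ⟨(k:ℝ)+1, by positivity, hk⟩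

lemma measurable_rearr (f : EuclideanSpace ℝ (Fin n) → ℝ) : Measurable (rearr f) := by
  apply measurable_of_Ioi
  intro y
  rcases lt_or_ge y 0 with hy | hy
  · have : rearr f ⁻¹' Ioi y = univ :=
      eq_univ_of_forall fun u => lt_of_lt_of_le hy (rearr_nonneg f u)
    rw [this]; exact MeasurableSet.univ
  · apply Set.OrdConnected.measurableSet
    constructor
    intro u1 h1 u2 h2 u hu
    simp only [mem_preimage, mem_Ioi] at h1 h2 ⊢
    have hne1 : (SS f u1).Nonempty := by
      by_contra hne
      rw [Set.not_nonempty_iff_eq_empty] at hne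
      have h0 : rearr f u1 = 0 := by rw [rearr_eq, hne, Real.sInf_empty]
      rw [h0] at h1
      exact absurd h1 (not_lt.2 hy)
    have hneu : (SS f u).Nonempty := hne1.mono (SS_mono f hu.1)
    have hle : rearr f u2 ≤ rearr f u :=
      csInf_le_csInf ⟨0, fun _ hs => hs.1.le⟩ hneu (SS_mono f hu.2)
    exact lt_of_lt_of_le h2 hle

/-- Key lemma A: bound on ∫₀ᵗ φ* via a cut level C. -/
lemma lemA (φ : EuclideanSpace ℝ (Fin n) → ℝ) (hφ : Measurable φ) {t : ℝ} (ht : 0 < t)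
    (C : ℝ≥0∞) :
    ∫⁻ u in Ioc (0:ℝ) t, ENNReal.ofReal (rearr φ u) ≤
      ENNReal.ofReal t * C + ∫⁻ x, (ENNReal.ofReal |φ x| - C) := by
  rcases eq_top_or_lt_top C with hC | hC
  · rw [hC, ENNReal.mul_top (by simp [ht, ht.le, ht.ne'] : ENNReal.ofReal t ≠ 0)]
    exact le_top.trans (le_add_right le_rfl)
  set c := C.toReal with hc
  have hc0 : 0 ≤ c := ENNReal.toReal_nonneg
  have hCc : ENNReal.ofReal c = C := ENNReal.ofReal_toReal hC.ne
  -- layer cake for the LHS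
  rw [lintegral_eq_lintegral_meas_lt (volume.restrict (Ioc (0:ℝ) t))
      (Filter.Eventually.of_forall fun u => rearr_nonneg φ u) (measurable_rearr φ).aemeasurable]
  have hsplit : Ioi (0:ℝ) = Ioc 0 c ∪ Ioi c := (Ioc_union_Ioi_eq_Ioi hc0).symm
  rw [hsplit, lintegral_union measurableSet_Ioi (Ioc_disjoint_Ioi le_rfl)]
  have hterm1 : ∫⁻ y in Ioc (0:ℝ) c,
      (volume.restrict (Ioc (0:ℝ) t)) {u | y < rearr φ u} ≤ ENNReal.ofReal t * C := by
    calc ∫⁻ y in Ioc (0:ℝ) c, (volume.restrict (Ioc (0:ℝ) t)) {u | y < rearr φ u}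
        ≤ ∫⁻ _ in Ioc (0:ℝ) c, ENNReal.ofReal t := by
          apply lintegral_mono_ae
          apply Filter.Eventually.of_forall
          intro y
          calc (volume.restrict (Ioc (0:ℝ) t)) {u | y < rearr φ u}
              ≤ (volume.restrict (Ioc (0:ℝ) t)) univ := measure_mono (subset_univ _)
            _ = volume (Ioc (0:ℝ) t) := by
                rw [Measure.restrict_apply' measurableSet_Ioc, univ_inter]
            _ = ENNReal.ofReal t := by rw [Real.volume_Ioc, sub_zero]
      _ = ENNReal.ofReal t * C := by
          rw [setLIntegral_const, Real.volume_Ioc, sub_zero, hCc]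
  have hterm2 : ∫⁻ y in Ioi c, (volume.restrict (Ioc (0:ℝ) t)) {u | y < rearr φ u}
      ≤ ∫⁻ x, (ENNReal.ofReal |φ x| - C) := by
    have hstep : ∫⁻ y in Ioi c, (volume.restrict (Ioc (0:ℝ) t)) {u | y < rearr φ u}
        ≤ ∫⁻ y in Ioi c, dd φ y := by
      apply lintegral_mono_ae
      rw [ae_restrict_iff' measurableSet_Ioi]
      apply Filter.Eventually.of_forall
      intro y hy
      have hy0 : 0 < y := lt_of_le_of_lt hc0 hy
      rcases eq_top_or_lt_top (dd φ y) with hL | hL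
      · rw [hL]; exact le_top
      have hsub : {u | y < rearr φ u} ∩ Ioc (0:ℝ) t ⊆ Ioc 0 (dd φ y).toReal := by
        rintro u ⟨hu1, hu2, _⟩
        refine ⟨hu2, ?_⟩
        have := ofReal_le_dd_of_lt_rearr hy0 hu1
        exact (ENNReal.ofReal_le_iff_le_toReal hL.ne).1 this
      calc (volume.restrict (Ioc (0:ℝ) t)) {u | y < rearr φ u}
          = volume ({u | y < rearr φ u} ∩ Ioc (0:ℝ) t) :=
            Measure.restrict_apply' measurableSet_Ioc
        _ ≤ volume (Ioc (0:ℝ) (dd φ y).toReal) := measure_mono hsub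
        _ = ENNReal.ofReal ((dd φ y).toReal - 0) := Real.volume_Ioc
        _ ≤ dd φ y := by rw [sub_zero, ENNReal.ofReal_toReal hL.ne]
    refine hstep.trans (le_of_eq ?_)
    -- ∫_{Ioi c} dd φ = ∫ x, (ofReal |φ x| - C)
    have hshift : ∫⁻ y in Ioi c, dd φ y = ∫⁻ y in Ioi (0:ℝ), dd φ (y + c) := by
      have hemb : MeasurableEmbedding (fun y : ℝ => y + c) :=
        (Homeomorph.addRight c).measurableEmbedding
      have hpre : (fun y : ℝ => y + c) ⁻¹' Ioi c = Ioi 0 := by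
        ext y; simp [lt_add_iff_pos_left]
      rw [← (measurePreserving_add_right volume c).setLIntegral_comp_preimage_emb hemb
        (dd φ) (Ioi c), hpre]
    rw [hshift]
    have hlc2 : ∫⁻ x, ENNReal.ofReal (max (|φ x| - c) 0)
        = ∫⁻ y in Ioi (0:ℝ), volume {x | y < max (|φ x| - c) 0} := by
      exact lintegral_eq_lintegral_meas_lt volume
        (Filter.Eventually.of_forall fun x => le_max_right _ _)
        ((hφ.abs.sub measurable_const).max measurable_const).aemeasurable
    have heq1 : ∀ x, ENNReal.ofReal (max (|φ x| - c) 0) = ENNReal.ofReal |φ x| - C := by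
      intro x
      rcases le_total (|φ x| - c) 0 with hneg | hpos
      · rw [max_eq_right hneg, ENNReal.ofReal_zero, eq_comm, tsub_eq_zero_iff_le, ← hCc]
        exact ofReal_le_ofReal (by linarith)
      · rw [max_eq_left hpos, ENNReal.ofReal_sub _ hc0, hCc]
    have heq2 : ∀ y ∈ Ioi (0:ℝ), volume {x : EuclideanSpace ℝ (Fin n) |
        y < max (|φ x| - c) 0} = dd φ (y + c) := by
      intro y hy
      rw [mem_Ioi] at hy
      congr 1
      ext x
      simp only [mem_setOf_eq, dd, lt_max_iff]
      constructor
      · rintro (hlt | hlt)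
        · linarith
        · exact absurd hy (not_lt.2 hlt.le)
      · intro hlt; left; linarith
    calc ∫⁻ y in Ioi (0:ℝ), dd φ (y + c)
        = ∫⁻ y in Ioi (0:ℝ), volume {x | y < max (|φ x| - c) 0} := by
          refine setLIntegral_congr_fun measurableSet_Ioi ?_
          intro y hy
          exact (heq2 y hy).symm
      _ = ∫⁻ x, ENNReal.ofReal (max (|φ x| - c) 0) := hlc2.symm
      _ = ∫⁻ x, (ENNReal.ofReal |φ x| - C) := by
          apply lintegral_congr
          exact heq1
  exact add_le_add hterm1 hterm2

/-- kernel: convolution of two indicator functions (as a lower integral) -/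
noncomputable def KK (F G : Set (EuclideanSpace ℝ (Fin n)))
    (x : EuclideanSpace ℝ (Fin n)) : ℝ≥0∞ :=
  ∫⁻ y, F.indicator 1 (x - y) * G.indicator 1 y

lemma indicator_le_one' (S : Set (EuclideanSpace ℝ (Fin n))) (z : EuclideanSpace ℝ (Fin n)) :
    S.indicator (1 : EuclideanSpace ℝ (Fin n) → ℝ≥0∞) z ≤ 1 := by
  by_cases hz : z ∈ S <;> simp [hz]

lemma KK_le_left {F G : Set (EuclideanSpace ℝ (Fin n))} (hF : MeasurableSet F)
    (x : EuclideanSpace ℝ (Fin n)) : KK F G x ≤ volume F := by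
  calc KK F G x ≤ ∫⁻ y, F.indicator 1 (x - y) := by
        apply lintegral_mono
        intro y
        exact mul_le_of_le_one_right' (indicator_le_one' G y)
    _ = ∫⁻ z, F.indicator 1 z := by
        exact (Measure.measurePreserving_sub_left volume x).lintegral_comp
          (measurable_one.indicator hF)
    _ = volume F := lintegral_indicator_one hF

lemma KK_le_right {F G : Set (EuclideanSpace ℝ (Fin n))} (hG : MeasurableSet G)
    (x : EuclideanSpace ℝ (Fin n)) : KK F G x ≤ volume G := by
  calc KK F G x ≤ ∫⁻ y, G.indicator 1 y := by
        apply lintegral_mono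
        intro y
        exact mul_le_of_le_one_left' (indicator_le_one' F (x - y))
    _ = volume G := lintegral_indicator_one hG

lemma lintegral_KK {F G : Set (EuclideanSpace ℝ (Fin n))} (hF : MeasurableSet F)
    (hG : MeasurableSet G) : ∫⁻ x, KK F G x = volume F * volume G := by
  have hmeas : AEMeasurable (Function.uncurry fun x y : EuclideanSpace ℝ (Fin n) =>
      F.indicator (1 : EuclideanSpace ℝ (Fin n) → ℝ≥0∞) (x - y) * G.indicator 1 y)
      ((volume : Measure (EuclideanSpace ℝ (Fin n))).prod volume) := by
    apply Measurable.aemeasurable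
    exact ((measurable_one.indicator hF).comp (measurable_fst.sub measurable_snd)).mul
      ((measurable_one.indicator hG).comp measurable_snd)
  rw [show (fun x => KK F G x) = fun x => ∫⁻ y, F.indicator 1 (x - y) * G.indicator 1 y from rfl]
  rw [lintegral_lintegral_swap hmeas]
  have hinner : ∀ y : EuclideanSpace ℝ (Fin n),
      ∫⁻ x, F.indicator (1 : EuclideanSpace ℝ (Fin n) → ℝ≥0∞) (x - y) * G.indicator 1 y
        = volume F * G.indicator 1 y := by
    intro y
    have hm : Measurable fun x : EuclideanSpace ℝ (Fin n) =>
        F.indicator (1 : EuclideanSpace ℝ (Fin n) → ℝ≥0∞) (x - y) :=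
      (measurable_one.indicator hF).comp (measurable_sub_const y)
    rw [lintegral_mul_const _ hm]
    congr 1
    calc ∫⁻ x, F.indicator (1 : EuclideanSpace ℝ (Fin n) → ℝ≥0∞) (x - y)
        = ∫⁻ z, F.indicator 1 z :=
          (measurePreserving_sub_right volume y).lintegral_comp (measurable_one.indicator hF)
      _ = volume F := lintegral_indicator_one hF
  simp_rw [hinner]
  rw [lintegral_const_mul _ (measurable_one.indicator hG), lintegral_indicator_one hG]

/-- per-pair bound: optimal cut for one pair of indicator functions -/
lemma pair_bound {F G : Set (EuclideanSpace ℝ (Fin n))} (hF : MeasurableSet F)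
    (hG : MeasurableSet G) (T : ℝ≥0∞) :
    T * (if T * min (volume F) (volume G) ≤ volume F * volume G
          then min (volume F) (volume G) else 0)
      + ∫⁻ x, (KK F G x - (if T * min (volume F) (volume G) ≤ volume F * volume G
          then min (volume F) (volume G) else 0))
      ≤ min (volume F * volume G) (T * min (volume F) (volume G)) := by
  by_cases hcond : T * min (volume F) (volume G) ≤ volume F * volume G
  · rw [if_pos hcond]
    have hzero : ∀ x, KK F G x - min (volume F) (volume G) = 0 := by
      intro x
      exact tsub_eq_zero_of_le (le_min (KK_le_left hF x) (KK_le_right hG x))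
    simp only [hzero, lintegral_zero, add_zero]
    exact le_min hcond le_rfl
  · rw [if_neg hcond]
    simp only [mul_zero, tsub_zero, zero_add, lintegral_KK hF hG]
    exact le_min le_rfl (le_of_not_ge hcond)

/-- the elementary wedge inequality -/
lemma wedge {T a b : ℝ≥0∞} :
    min (a * b) (T * min a b) ≤ min a T * min b T + T * (min a b - T) := by
  rcases le_total a T with ha | ha <;> rcases le_total b T with hb | hb
  · have h0 : min a b - T = 0 := tsub_eq_zero_of_le ((min_le_left a b).trans ha)
    rw [h0, mul_zero, add_zero, min_eq_left ha, min_eq_left hb]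
    exact min_le_left _ _
  · have hab : min a b = a := min_eq_left (ha.trans hb)
    have h0 : min a b - T = 0 := by rw [hab]; exact tsub_eq_zero_of_le ha
    rw [h0, mul_zero, add_zero, min_eq_left ha, min_eq_right hb, hab]
    exact (min_le_right _ _).trans (le_of_eq (mul_comm _ _))
  · have hab : min a b = b := min_eq_right (hb.trans ha)
    have h0 : min a b - T = 0 := by rw [hab]; exact tsub_eq_zero_of_le hb
    rw [h0, mul_zero, add_zero, min_eq_right ha, min_eq_left hb, hab]
    exact min_le_right _ _
  · have hT : T ≤ min a b := le_min ha hb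
    rw [min_eq_right ha, min_eq_right hb]
    calc min (a * b) (T * min a b) ≤ T * min a b := min_le_right _ _
      _ = T * (T + (min a b - T)) := by rw [add_tsub_cancel_of_le hT]
      _ = T * T + T * (min a b - T) := by rw [mul_add]

/-- F1: lower bound for ∫₀ᵗ f* by layer-cake -/
lemma lower_bound {f : EuclideanSpace ℝ (Fin n) → ℝ} (hf : MemS0 f) {t : ℝ} (ht : 0 < t) :
    ∫⁻ l in Ioi (0:ℝ), min (dd f l) (ENNReal.ofReal t)
      ≤ ∫⁻ u in Ioc (0:ℝ) t, ENNReal.ofReal (rearr f u) := by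
  rw [lintegral_eq_lintegral_meas_lt (volume.restrict (Ioc (0:ℝ) t))
      (Filter.Eventually.of_forall fun u => rearr_nonneg f u) (measurable_rearr f).aemeasurable]
  apply lintegral_mono_ae
  rw [ae_restrict_iff' measurableSet_Ioi]
  apply Filter.Eventually.of_forall
  intro l hl
  rw [mem_Ioi] at hl
  rw [Measure.restrict_apply' measurableSet_Ioc]
  have key : ∀ k : ℕ, min (dd f (l + 1/((k:ℝ)+1))) (ENNReal.ofReal t)
      ≤ volume ({u | l < rearr f u} ∩ Ioc (0:ℝ) t) := by
    intro k
    set l' := l + 1/((k:ℝ)+1) with hl'def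
    have hll' : l < l' := lt_add_of_pos_right _ (by positivity)
    have hl'0 : 0 < l' := hl.trans hll'
    have hLfin : dd f l' ≠ ⊤ := (hf.2 l' hl'0).ne
    have hsub : Ioc (0:ℝ) (min t (dd f l').toReal) ⊆ {u | l < rearr f u} ∩ Ioc (0:ℝ) t := by
      rintro u ⟨hu0, hule⟩
      have hut : u ≤ t := hule.trans (min_le_left _ _)
      have huL : ENNReal.ofReal u ≤ dd f l' := by
        rw [ENNReal.ofReal_le_iff_le_toReal hLfin]
        exact hule.trans (min_le_right _ _)
      have hge : l' ≤ rearr f u := le_rearr_of_dd (SS_nonempty hf hu0) huL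
      exact ⟨lt_of_lt_of_le hll' hge, hu0, hut⟩
    calc min (dd f l') (ENNReal.ofReal t)
        = ENNReal.ofReal (min t (dd f l').toReal) := by
          rcases le_total t (dd f l').toReal with hcase | hcase
          · rw [min_eq_left hcase, min_eq_right]
            rw [← ENNReal.ofReal_toReal hLfin]
            exact ofReal_le_ofReal hcase
          · rw [min_eq_right hcase, min_eq_left, ENNReal.ofReal_toReal hLfin]
            rw [← ENNReal.ofReal_toReal hLfin]
            exact ofReal_le_ofReal hcase
      _ = volume (Ioc (0:ℝ) (min t (dd f l').toReal)) := by rw [Real.volume_Ioc, sub_zero]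
      _ ≤ volume ({u | l < rearr f u} ∩ Ioc (0:ℝ) t) := measure_mono hsub
  have hdd : dd f l = ⨆ k : ℕ, dd f (l + 1/((k:ℝ)+1)) := by
    have hset : {x : EuclideanSpace ℝ (Fin n) | l < |f x|}
        = ⋃ k : ℕ, {x | l + 1/((k:ℝ)+1) < |f x|} := by
      ext x
      simp only [mem_setOf_eq, mem_iUnion]
      constructor
      · intro hx
        obtain ⟨k, hk⟩ := exists_nat_one_div_lt (show (0:ℝ) < |f x| - l by linarith)
        exact ⟨k, by linarith⟩
      · rintro ⟨k, hk⟩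
        have : (0:ℝ) < 1/((k:ℝ)+1) := by positivity
        linarith
    rw [show dd f l = volume {x | l < |f x|} from rfl, hset]
    rw [Directed.measure_iUnion]
    · rfl
    · apply Monotone.directed_le
      intro j k hjk x hx
      simp only [mem_setOf_eq] at hx ⊢
      have h1 : 1/((k:ℝ)+1) ≤ 1/((j:ℝ)+1) := by
        apply one_div_le_one_div_of_le (by positivity)
        exact_mod_cast by omega
      linarith
  calc min (dd f l) (ENNReal.ofReal t)
      = (⨆ k : ℕ, dd f (l + 1/((k:ℝ)+1))) ⊓ ENNReal.ofReal t := by rw [hdd]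
    _ = ⨆ k : ℕ, (dd f (l + 1/((k:ℝ)+1)) ⊓ ENNReal.ofReal t) := iSup_inf_eq _ _
    _ ≤ volume ({u | l < rearr f u} ∩ Ioc (0:ℝ) t) := iSup_le key

/-- F2 inner slice bound -/
lemma slice_le {f : EuclideanSpace ℝ (Fin n) → ℝ} (hf : MemS0 f) {u : ℝ} (hu : 0 < u) :
    volume ({l | ENNReal.ofReal u ≤ dd f l} ∩ Ioi (0:ℝ)) ≤ ENNReal.ofReal (rearr f u) := by
  have hsub : {l | ENNReal.ofReal u ≤ dd f l} ∩ Ioi (0:ℝ) ⊆ Ioc 0 (rearr f u) := by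
    rintro l ⟨hl, hl0⟩
    exact ⟨hl0, le_rearr_of_dd (SS_nonempty hf hu) hl⟩
  calc volume ({l | ENNReal.ofReal u ≤ dd f l} ∩ Ioi (0:ℝ))
      ≤ volume (Ioc (0:ℝ) (rearr f u)) := measure_mono hsub
    _ = ENNReal.ofReal (rearr f u - 0) := Real.volume_Ioc
    _ = ENNReal.ofReal (rearr f u) := by rw [sub_zero]

/-- the product measure on the two layer-cake parameters -/
noncomputable def PP : Measure (ℝ × ℝ) :=
  (volume.restrict (Ioi (0:ℝ))).prod (volume.restrict (Ioi (0:ℝ)))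

instance : SFinite PP := by unfold PP; infer_instance

/-- super-level sets -/
def AA (f : EuclideanSpace ℝ (Fin n) → ℝ) (l : ℝ) : Set (EuclideanSpace ℝ (Fin n)) :=
  {z | l < |f z|}

lemma AA_measurableSet {f : EuclideanSpace ℝ (Fin n) → ℝ} (hf : Measurable f) (l : ℝ) :
    MeasurableSet (AA f l) := measurableSet_lt measurable_const hf.abs

lemma volume_AA (f : EuclideanSpace ℝ (Fin n) → ℝ) (l : ℝ) : volume (AA f l) = dd f l := rfl

lemma layer_one (c : ℝ) :
    ∫⁻ l in Ioi (0:ℝ), (Iio c).indicator (1 : ℝ → ℝ≥0∞) l = ENNReal.ofReal c := by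
  rw [lintegral_indicator_one measurableSet_Iio,
    Measure.restrict_apply' measurableSet_Ioi]
  have : Iio c ∩ Ioi (0:ℝ) = Ioo 0 c := by ext l; simp [and_comm]
  rw [this, Real.volume_Ioo, sub_zero]

lemma ind_swap (f : EuclideanSpace ℝ (Fin n) → ℝ) (l : ℝ) (z : EuclideanSpace ℝ (Fin n)) :
    (Iio |f z|).indicator (1 : ℝ → ℝ≥0∞) l = (AA f l).indicator 1 z := by
  by_cases hc : l < |f z| <;> simp [AA, Set.indicator, hc, mem_setOf_eq]

/-- pointwise layer-cake bound for the convolution -/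
lemma conv_pointwise {f g : EuclideanSpace ℝ (Fin n) → ℝ}
    (hf : Measurable f) (hg : Measurable g) (hf0 : ∀ x, 0 ≤ f x) (hg0 : ∀ x, 0 ≤ g x)
    (x : EuclideanSpace ℝ (Fin n)) :
    ENNReal.ofReal |∫ y, f (x - y) * g y| ≤ ∫⁻ p, KK (AA f p.1) (AA g p.2) x ∂PP := by
  have step1 : ENNReal.ofReal |∫ y, f (x - y) * g y|
      ≤ ∫⁻ y, ENNReal.ofReal |f (x - y)| * ENNReal.ofReal |g y| := by
    rw [abs_of_nonneg (integral_nonneg fun y => mul_nonneg (hf0 _) (hg0 _))]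
    by_cases hint : Integrable (fun y => f (x - y) * g y) volume
    · rw [ofReal_integral_eq_lintegral_ofReal hint
        (Filter.Eventually.of_forall fun y => mul_nonneg (hf0 _) (hg0 _))]
      apply lintegral_mono
      intro y
      dsimp only
      rw [ENNReal.ofReal_mul (hf0 _), abs_of_nonneg (hf0 _), abs_of_nonneg (hg0 _)]
    · rw [integral_undef hint]; simp
  have step2 : ∀ y, ENNReal.ofReal |f (x - y)| * ENNReal.ofReal |g y|
      = ∫⁻ p, (AA f p.1).indicator 1 (x - y) * (AA g p.2).indicator 1 y ∂PP := by
    intro y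
    rw [← layer_one |f (x - y)|, ← layer_one |g y|]
    rw [← lintegral_prod_mul (measurable_one.indicator measurableSet_Iio).aemeasurable
      (measurable_one.indicator measurableSet_Iio).aemeasurable]
    unfold PP
    apply lintegral_congr
    intro p
    rw [ind_swap f p.1 (x - y), ind_swap g p.2 y]
  have hS1 : MeasurableSet {q : EuclideanSpace ℝ (Fin n) × ℝ × ℝ | q.2.1 < |f (x - q.1)|} :=
    measurableSet_lt measurable_snd.fst ((hf.comp (measurable_const.sub measurable_fst)).abs)
  have hS2 : MeasurableSet {q : EuclideanSpace ℝ (Fin n) × ℝ × ℝ | q.2.2 < |g q.1|} :=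
    measurableSet_lt measurable_snd.snd (hg.comp measurable_fst).abs
  have huncur : AEMeasurable (Function.uncurry fun (y : EuclideanSpace ℝ (Fin n)) (p : ℝ × ℝ) =>
      (AA f p.1).indicator (1 : EuclideanSpace ℝ (Fin n) → ℝ≥0∞) (x - y)
        * (AA g p.2).indicator 1 y) ((volume : Measure (EuclideanSpace ℝ (Fin n))).prod PP) := by
    apply Measurable.aemeasurable
    have : (Function.uncurry fun (y : EuclideanSpace ℝ (Fin n)) (p : ℝ × ℝ) =>
        (AA f p.1).indicator (1 : EuclideanSpace ℝ (Fin n) → ℝ≥0∞) (x - y)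
          * (AA g p.2).indicator 1 y)
        = fun q : EuclideanSpace ℝ (Fin n) × ℝ × ℝ =>
          ({q : EuclideanSpace ℝ (Fin n) × ℝ × ℝ | q.2.1 < |f (x - q.1)|}.indicator 1 q)
            * ({q : EuclideanSpace ℝ (Fin n) × ℝ × ℝ | q.2.2 < |g q.1|}.indicator 1 q) := by
      funext q
      by_cases h1 : q.2.1 < |f (x - q.1)| <;> by_cases h2 : q.2.2 < |g q.1| <;>
        simp [Function.uncurry, AA, Set.indicator, h1, h2, mem_setOf_eq]
    rw [this]
    exact (measurable_one.indicator hS1).mul (measurable_one.indicator hS2)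
  calc ENNReal.ofReal |∫ y, f (x - y) * g y|
      ≤ ∫⁻ y, ENNReal.ofReal |f (x - y)| * ENNReal.ofReal |g y| := step1
    _ = ∫⁻ (y : EuclideanSpace ℝ (Fin n)), ∫⁻ (p : ℝ × ℝ), (AA f p.1).indicator 1 (x - y) * (AA g p.2).indicator 1 y ∂PP := by
        apply lintegral_congr; exact step2
    _ = ∫⁻ (p : ℝ × ℝ), (∫⁻ (y : EuclideanSpace ℝ (Fin n)),
          (AA f p.1).indicator 1 (x - y) * (AA g p.2).indicator 1 y) ∂PP := by
        exact lintegral_lintegral_swap huncur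
    _ = ∫⁻ p, KK (AA f p.1) (AA g p.2) x ∂PP := rfl

/-- joint measurability of the kernel -/
lemma KK_joint_meas {f g : EuclideanSpace ℝ (Fin n) → ℝ}
    (hf : Measurable f) (hg : Measurable g) :
    Measurable (fun q : (ℝ × ℝ) × EuclideanSpace ℝ (Fin n) =>
      KK (AA f q.1.1) (AA g q.1.2) q.2) := by
  have hS1 : MeasurableSet {r : ((ℝ × ℝ) × EuclideanSpace ℝ (Fin n)) × EuclideanSpace ℝ (Fin n) |
      r.1.1.1 < |f (r.1.2 - r.2)|} :=
    measurableSet_lt measurable_fst.fst.fst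
      ((hf.comp (measurable_fst.snd.sub measurable_snd)).abs)
  have hS2 : MeasurableSet {r : ((ℝ × ℝ) × EuclideanSpace ℝ (Fin n)) × EuclideanSpace ℝ (Fin n) |
      r.1.1.2 < |g r.2|} :=
    measurableSet_lt measurable_fst.fst.snd (hg.comp measurable_snd).abs
  have key : (fun q : (ℝ × ℝ) × EuclideanSpace ℝ (Fin n) => KK (AA f q.1.1) (AA g q.1.2) q.2)
      = fun q => ∫⁻ y, ({r : ((ℝ × ℝ) × EuclideanSpace ℝ (Fin n)) × EuclideanSpace ℝ (Fin n) |
          r.1.1.1 < |f (r.1.2 - r.2)|}.indicator 1 (q, y))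
          * ({r : ((ℝ × ℝ) × EuclideanSpace ℝ (Fin n)) × EuclideanSpace ℝ (Fin n) |
          r.1.1.2 < |g r.2|}.indicator 1 (q, y)) := by
    funext q
    apply lintegral_congr
    intro y
    by_cases h1 : q.1.1 < |f (q.2 - y)| <;> by_cases h2 : q.1.2 < |g y| <;>
      simp [KK, AA, Set.indicator, h1, h2, mem_setOf_eq]
  rw [key]
  exact Measurable.lintegral_prod_right'
    ((measurable_one.indicator hS1).mul (measurable_one.indicator hS2))

/-- F2: tail estimate -/
lemma F2 {f g : EuclideanSpace ℝ (Fin n) → ℝ} (hf : MemS0 f) (hg : MemS0 g)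
    {t : ℝ} (ht : 0 < t) :
    ∫⁻ (p : ℝ × ℝ), (min (dd f p.1) (dd g p.2) - ENNReal.ofReal t) ∂PP
      ≤ ∫⁻ u in Ioi t, ENNReal.ofReal (rearr f u * rearr g u) := by
  have hvol_level : ∀ m : ℝ≥0∞,
      volume ({u : ℝ | ENNReal.ofReal u ≤ m} ∩ Ioi t) = m - ENNReal.ofReal t := by
    intro m
    rcases eq_top_or_lt_top m with hm | hm
    · rw [hm]
      have huniv : {u : ℝ | ENNReal.ofReal u ≤ ⊤} = univ := eq_univ_of_forall fun u => (le_top : ENNReal.ofReal u ≤ ⊤)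
      rw [huniv, univ_inter, Real.volume_Ioi, ENNReal.top_sub ofReal_ne_top]
    · have hioc : {u : ℝ | ENNReal.ofReal u ≤ m} ∩ Ioi t = Ioc t m.toReal := by
        ext u
        simp only [mem_inter_iff, mem_setOf_eq, mem_Ioi, mem_Ioc]
        constructor
        · rintro ⟨h1, h2⟩
          exact ⟨h2, (ENNReal.ofReal_le_iff_le_toReal hm.ne).1 h1⟩
        · rintro ⟨h1, h2⟩
          exact ⟨(ENNReal.ofReal_le_iff_le_toReal hm.ne).2 h2, h1⟩
      rw [hioc, Real.volume_Ioc, ENNReal.ofReal_sub _ ht.le, ENNReal.ofReal_toReal hm.ne]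
  have hlevel_meas : ∀ m : ℝ≥0∞, MeasurableSet {u : ℝ | ENNReal.ofReal u ≤ m} :=
    fun m => measurableSet_le ENNReal.measurable_ofReal measurable_const
  have hpt : ∀ p : ℝ × ℝ, min (dd f p.1) (dd g p.2) - ENNReal.ofReal t
      = ∫⁻ u in Ioi t, ({u : ℝ | ENNReal.ofReal u ≤ dd f p.1}.indicator 1 u)
          * ({u : ℝ | ENNReal.ofReal u ≤ dd g p.2}.indicator 1 u) := by
    intro p
    have hmin : ∀ u : ℝ, ({u : ℝ | ENNReal.ofReal u ≤ dd f p.1}.indicator (1 : ℝ → ℝ≥0∞) u)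
        * ({u : ℝ | ENNReal.ofReal u ≤ dd g p.2}.indicator 1 u)
        = {u : ℝ | ENNReal.ofReal u ≤ min (dd f p.1) (dd g p.2)}.indicator 1 u := by
      intro u
      by_cases h1 : ENNReal.ofReal u ≤ dd f p.1 <;> by_cases h2 : ENNReal.ofReal u ≤ dd g p.2 <;>
        simp [Set.indicator, h1, h2, le_min_iff, mem_setOf_eq]
    rw [lintegral_congr hmin, lintegral_indicator_one (hlevel_meas _),
      Measure.restrict_apply' measurableSet_Ioi, hvol_level]
  calc ∫⁻ (p : ℝ × ℝ), (min (dd f p.1) (dd g p.2) - ENNReal.ofReal t) ∂PP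
      = ∫⁻ (p : ℝ × ℝ), (∫⁻ u in Ioi t,
          ({u : ℝ | ENNReal.ofReal u ≤ dd f p.1}.indicator 1 u)
          * ({u : ℝ | ENNReal.ofReal u ≤ dd g p.2}.indicator 1 u)) ∂PP :=
        lintegral_congr hpt
    _ = ∫⁻ u in Ioi t, ∫⁻ (p : ℝ × ℝ),
          (({u : ℝ | ENNReal.ofReal u ≤ dd f p.1}.indicator 1 u)
          * ({u : ℝ | ENNReal.ofReal u ≤ dd g p.2}.indicator 1 u)) ∂PP := by
        apply lintegral_lintegral_swap
        apply Measurable.aemeasurable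
        have heq : (Function.uncurry fun (p : ℝ × ℝ) (u : ℝ) =>
            ({u : ℝ | ENNReal.ofReal u ≤ dd f p.1}.indicator (1 : ℝ → ℝ≥0∞) u)
            * ({u : ℝ | ENNReal.ofReal u ≤ dd g p.2}.indicator 1 u))
            = fun q : (ℝ × ℝ) × ℝ =>
              ({q : (ℝ × ℝ) × ℝ | ENNReal.ofReal q.2 ≤ dd f q.1.1}.indicator 1 q)
              * ({q : (ℝ × ℝ) × ℝ | ENNReal.ofReal q.2 ≤ dd g q.1.2}.indicator 1 q) := by
          funext q
          by_cases h1 : ENNReal.ofReal q.2 ≤ dd f q.1.1 <;>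
            by_cases h2 : ENNReal.ofReal q.2 ≤ dd g q.1.2 <;>
            simp [Function.uncurry, Set.indicator, h1, h2, mem_setOf_eq]
        rw [heq]
        have hq1 : MeasurableSet {q : (ℝ × ℝ) × ℝ | ENNReal.ofReal q.2 ≤ dd f q.1.1} :=
          measurableSet_le (ENNReal.measurable_ofReal.comp measurable_snd)
            ((dd_measurable f).comp measurable_fst.fst)
        have hq2 : MeasurableSet {q : (ℝ × ℝ) × ℝ | ENNReal.ofReal q.2 ≤ dd g q.1.2} :=
          measurableSet_le (ENNReal.measurable_ofReal.comp measurable_snd)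
            ((dd_measurable g).comp measurable_fst.snd)
        exact (measurable_one.indicator hq1).mul (measurable_one.indicator hq2)
    _ ≤ ∫⁻ u in Ioi t, ENNReal.ofReal (rearr f u * rearr g u) := by
        apply lintegral_mono_ae
        rw [ae_restrict_iff' measurableSet_Ioi]
        apply Filter.Eventually.of_forall
        intro u hu
        rw [mem_Ioi] at hu
        have hu0 : 0 < u := ht.trans hu
        have hswap : ∀ p : ℝ × ℝ,
            ({u : ℝ | ENNReal.ofReal u ≤ dd f p.1}.indicator (1 : ℝ → ℝ≥0∞) u)
            * ({u : ℝ | ENNReal.ofReal u ≤ dd g p.2}.indicator 1 u)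
            = ({l : ℝ | ENNReal.ofReal u ≤ dd f l}.indicator (1 : ℝ → ℝ≥0∞) p.1)
            * ({l : ℝ | ENNReal.ofReal u ≤ dd g l}.indicator 1 p.2) := by
          intro p
          by_cases h1 : ENNReal.ofReal u ≤ dd f p.1 <;>
            by_cases h2 : ENNReal.ofReal u ≤ dd g p.2 <;>
            simp [Set.indicator, h1, h2, mem_setOf_eq]
        rw [lintegral_congr hswap]
        unfold PP
        rw [lintegral_prod_mul
          (measurable_one.indicator (measurableSet_le measurable_const (dd_measurable f))).aemeasurable
          (measurable_one.indicator (measurableSet_le measurable_const (dd_measurable g))).aemeasurable]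
        rw [lintegral_indicator_one (measurableSet_le measurable_const (dd_measurable f)),
          lintegral_indicator_one (measurableSet_le measurable_const (dd_measurable g)),
          Measure.restrict_apply' measurableSet_Ioi, Measure.restrict_apply' measurableSet_Ioi,
          ENNReal.ofReal_mul (rearr_nonneg f u)]
        exact mul_le_mul' (slice_le hf hu0) (slice_le hg hu0)

/-- F3: product splitting -/
lemma F3 {f g : EuclideanSpace ℝ (Fin n) → ℝ} (T : ℝ≥0∞) :
    ∫⁻ (p : ℝ × ℝ), min (dd f p.1) T * min (dd g p.2) T ∂PP
      = (∫⁻ l in Ioi (0:ℝ), min (dd f l) T) * (∫⁻ l in Ioi (0:ℝ), min (dd g l) T) := by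
  unfold PP
  exact lintegral_prod_mul ((dd_measurable f).min measurable_const).aemeasurable
    ((dd_measurable g).min measurable_const).aemeasurable

/-- the main estimate: ∫₀ᵗ h* ≤ (∫₀ᵗ f*)(∫₀ᵗ g*) + t ∫ₜ^∞ f* g* -/
lemma main_est {f g : EuclideanSpace ℝ (Fin n) → ℝ} (hf : MemS0 f) (hg : MemS0 g)
    (hf0 : ∀ x, 0 ≤ f x) (hg0 : ∀ x, 0 ≤ g x)
    (h : EuclideanSpace ℝ (Fin n) → ℝ) (hh : h = fun x => ∫ y, f (x - y) * g y)
    {t : ℝ} (ht : 0 < t) :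
    ∫⁻ u in Ioc (0:ℝ) t, ENNReal.ofReal (rearr h u)
      ≤ (∫⁻ u in Ioc (0:ℝ) t, ENNReal.ofReal (rearr f u))
          * (∫⁻ u in Ioc (0:ℝ) t, ENNReal.ofReal (rearr g u))
        + ENNReal.ofReal t * ∫⁻ u in Ioi t, ENNReal.ofReal (rearr f u * rearr g u) := by
  set T := ENNReal.ofReal t with hT
  have hhmeas : Measurable h := by
    rw [hh]
    apply StronglyMeasurable.measurable
    apply MeasureTheory.StronglyMeasurable.integral_prod_right'
      (f := fun q : EuclideanSpace ℝ (Fin n) × EuclideanSpace ℝ (Fin n) => f (q.1 - q.2) * g q.2)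
    exact ((hf.1.comp (measurable_fst.sub measurable_snd)).mul (hg.1.comp measurable_snd)).stronglyMeasurable
  set d : ℝ × ℝ → ℝ≥0∞ := fun p =>
    if T * min (dd f p.1) (dd g p.2) ≤ dd f p.1 * dd g p.2
      then min (dd f p.1) (dd g p.2) else 0 with hd_def
  have hm1 : Measurable fun p : ℝ × ℝ => dd f p.1 := (dd_measurable f).comp measurable_fst
  have hm2 : Measurable fun p : ℝ × ℝ => dd g p.2 := (dd_measurable g).comp measurable_snd
  have hmm : Measurable fun p : ℝ × ℝ => min (dd f p.1) (dd g p.2) := hm1.min hm2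
  have hd_meas : Measurable d := by
    rw [hd_def]
    exact Measurable.ite (measurableSet_le (measurable_const.mul hmm) (hm1.mul hm2))
      hmm measurable_const
  set C' := ∫⁻ (p : ℝ × ℝ), d p ∂PP with hC'
  have hbig : AEMeasurable (Function.uncurry fun (x : EuclideanSpace ℝ (Fin n)) (p : ℝ × ℝ) =>
      KK (AA f p.1) (AA g p.2) x - d p)
      ((volume : Measure (EuclideanSpace ℝ (Fin n))).prod PP) := by
    apply Measurable.aemeasurable
    have h1 : Measurable fun q : EuclideanSpace ℝ (Fin n) × ℝ × ℝ =>
        KK (AA f q.2.1) (AA g q.2.2) q.1 :=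
      (KK_joint_meas hf.1 hg.1).comp (measurable_snd.prodMk measurable_fst)
    exact h1.sub (hd_meas.comp measurable_snd)
  calc ∫⁻ u in Ioc (0:ℝ) t, ENNReal.ofReal (rearr h u)
      ≤ T * C' + ∫⁻ x, (ENNReal.ofReal |h x| - C') := lemA h hhmeas ht C'
    _ ≤ T * C' + ∫⁻ x, ((∫⁻ (p : ℝ × ℝ), KK (AA f p.1) (AA g p.2) x ∂PP) - C') := by
        apply add_le_add_right
        apply lintegral_mono
        intro x
        apply tsub_le_tsub_right
        rw [hh]
        exact conv_pointwise hf.1 hg.1 hf0 hg0 x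
    _ ≤ T * C' + ∫⁻ x, (∫⁻ (p : ℝ × ℝ), (KK (AA f p.1) (AA g p.2) x - d p) ∂PP) := by
        apply add_le_add_right
        apply lintegral_mono
        intro x
        rw [tsub_le_iff_right, hC']
        calc ∫⁻ (p : ℝ × ℝ), KK (AA f p.1) (AA g p.2) x ∂PP
            ≤ ∫⁻ (p : ℝ × ℝ), ((KK (AA f p.1) (AA g p.2) x - d p) + d p) ∂PP :=
              lintegral_mono fun p => le_tsub_add
          _ = (∫⁻ (p : ℝ × ℝ), (KK (AA f p.1) (AA g p.2) x - d p) ∂PP)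
              + ∫⁻ (p : ℝ × ℝ), d p ∂PP := lintegral_add_right _ hd_meas
    _ = T * C' + ∫⁻ (p : ℝ × ℝ), (∫⁻ x, (KK (AA f p.1) (AA g p.2) x - d p)) ∂PP := by
        rw [lintegral_lintegral_swap hbig]
    _ = ∫⁻ (p : ℝ × ℝ), (T * d p + ∫⁻ x, (KK (AA f p.1) (AA g p.2) x - d p)) ∂PP := by
        rw [lintegral_add_left (hd_meas.const_mul T), lintegral_const_mul T hd_meas,
          hC']
    _ ≤ ∫⁻ (p : ℝ × ℝ), min (dd f p.1 * dd g p.2) (T * min (dd f p.1) (dd g p.2)) ∂PP := by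
        apply lintegral_mono
        intro p
        rw [hd_def]
        exact pair_bound (AA_measurableSet hf.1 p.1) (AA_measurableSet hg.1 p.2) T
    _ ≤ ∫⁻ (p : ℝ × ℝ), (min (dd f p.1) T * min (dd g p.2) T
          + T * (min (dd f p.1) (dd g p.2) - T)) ∂PP :=
        lintegral_mono fun p => wedge
    _ = (∫⁻ (p : ℝ × ℝ), min (dd f p.1) T * min (dd g p.2) T ∂PP)
          + T * ∫⁻ (p : ℝ × ℝ), (min (dd f p.1) (dd g p.2) - T) ∂PP := by
        rw [lintegral_add_left (f := fun p : ℝ × ℝ => min (dd f p.1) T * min (dd g p.2) T)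
            ((hm1.min measurable_const).mul (hm2.min measurable_const)),
          lintegral_const_mul T (f := fun p : ℝ × ℝ => min (dd f p.1) (dd g p.2) - T)
            (hmm.sub measurable_const)]
    _ ≤ (∫⁻ u in Ioc (0:ℝ) t, ENNReal.ofReal (rearr f u))
          * (∫⁻ u in Ioc (0:ℝ) t, ENNReal.ofReal (rearr g u))
        + T * ∫⁻ u in Ioi t, ENNReal.ofReal (rearr f u * rearr g u) := by
        apply add_le_add
        · rw [F3 T]
          exact mul_le_mul' (lower_bound hf ht) (lower_bound hg ht)
        · exact mul_le_mul_right (F2 hf hg ht) T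

end ONeilAux

/-- **O'Neil's inequality.** Let `f, g ∈ S₀(ℝⁿ)` be nonnegative and `h = f∗g`. Then for
all `t > 0`, `h**(t) ≤ t f**(t) g**(t) + ∫_t^∞ f*(u) g*(u) du`. -/
theorem oneil_inequality {n : ℕ} (f g : EuclideanSpace ℝ (Fin n) → ℝ)
    (hf : MemS0 f) (hg : MemS0 g) (hf0 : ∀ x, 0 ≤ f x) (hg0 : ∀ x, 0 ≤ g x)
    (h : EuclideanSpace ℝ (Fin n) → ℝ) (hh : h = fun x => ∫ y, f (x - y) * g y)
    (t : ℝ) (ht : 0 < t) :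
    rearr2 h t ≤ ENNReal.ofReal t * rearr2 f t * rearr2 g t
      + ∫⁻ u in Ioi t, ENNReal.ofReal (rearr f u * rearr g u) := by
  have main := ONeilAux.main_est hf hg hf0 hg0 h hh ht
  unfold rearr2
  set T := ENNReal.ofReal t with hT
  have hT0 : T ≠ 0 := by
    rw [hT]
    simp [ht, ht.le, ht.ne']
  have hTtop : T ≠ ⊤ := by rw [hT]; exact ofReal_ne_top
  set Ih := ∫⁻ u in Ioc (0:ℝ) t, ENNReal.ofReal (rearr h u) with hIh
  set If := ∫⁻ u in Ioc (0:ℝ) t, ENNReal.ofReal (rearr f u) with hIf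
  set Ig := ∫⁻ u in Ioc (0:ℝ) t, ENNReal.ofReal (rearr g u) with hIg
  set J := ∫⁻ u in Ioi t, ENNReal.ofReal (rearr f u * rearr g u) with hJ
  calc T⁻¹ * Ih ≤ T⁻¹ * (If * Ig + T * J) := mul_le_mul_right main _
    _ = T * (T⁻¹ * If) * (T⁻¹ * Ig) + J := by
        have hTT : T * T⁻¹ = 1 := ENNReal.mul_inv_cancel hT0 hTtop
        have hTT2 : T⁻¹ * T = 1 := ENNReal.inv_mul_cancel hT0 hTtop
        rw [mul_add]
        congr 1
        · calc T⁻¹ * (If * Ig) = (T * T⁻¹) * (T⁻¹ * (If * Ig)) := by rw [hTT, one_mul]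
            _ = T * (T⁻¹ * If) * (T⁻¹ * Ig) := by ring
        · rw [← mul_assoc, hTT2, one_mul]
end

section
/- Let n ∈ ℕ and 0 < α < n. There exists a constant C > 0, depending only on n and α, such that for every f ∈ S₀(ℝⁿ) and every t > 0, (M_α f)*(t) ≤ C sup_{t ≤ s < ∞} s^{α/n} f**(s). -/
open MeasureTheory Set ENNReal Metric

/-- The fractional maximal function
`M_α f(x) = sup_{r>0} |B(x,r)|^(α/n-1) ∫_{B(x,r)} |f|`. -/
noncomputable def fracMaximalFn {n : ℕ} (α : ℝ) (f : EuclideanSpace ℝ (Fin n) → ℝ)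
    (x : EuclideanSpace ℝ (Fin n)) : ℝ≥0∞ :=
  ⨆ r ∈ Ioi (0:ℝ),
    (volume (ball x r)) ^ (α / n - 1) * ∫⁻ y in ball x r, ENNReal.ofReal |f y|

/-- The nonincreasing rearrangement of an `ℝ≥0∞`-valued function. -/
noncomputable def rearrE {n : ℕ} (F : EuclideanSpace ℝ (Fin n) → ℝ≥0∞) (t : ℝ) : ℝ≥0∞ :=
  sInf {y : ℝ≥0∞ | 0 < y ∧ volume {x | y < F x} < ENNReal.ofReal t}

section Aux

variable {n : ℕ} {f : EuclideanSpace ℝ (Fin n) → ℝ}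

lemma measurableSet_dist (hf : Measurable f) (y : ℝ) :
    MeasurableSet {x : EuclideanSpace ℝ (Fin n) | y < |f x|} :=
  measurableSet_lt measurable_const hf.abs

lemma dist_antitone {y z : ℝ} (h : y ≤ z) :
    volume {x : EuclideanSpace ℝ (Fin n) | z < |f x|}
      ≤ volume {x | y < |f x|} :=
  measure_mono fun x hx => lt_of_le_of_lt h hx

/-- The distribution function tends to `0`; in particular it takes values below any
positive threshold. -/
lemma exists_dist_lt (hf : MemS0 f) {u : ℝ≥0∞} (hu : 0 < u) :
    ∃ y : ℝ, 0 < y ∧ volume {x | y < |f x|} < u := by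
  set s : ℕ → Set (EuclideanSpace ℝ (Fin n)) := fun k => {x | (k : ℝ) + 1 < |f x|} with hs
  have hmeas : ∀ k, NullMeasurableSet (s k) volume := fun k =>
    (measurableSet_dist hf.1 _).nullMeasurableSet
  have hanti : Antitone s := by
    intro k l hkl x hx
    have h1 : (k:ℝ) ≤ (l:ℝ) := Nat.cast_le.2 hkl
    have hx' : (l:ℝ) + 1 < |f x| := hx
    show (k:ℝ) + 1 < |f x|
    linarith
  have hfin : ∃ k, volume (s k) ≠ ∞ := by
    refine ⟨0, ?_⟩
    have h0 : s 0 = {x | (1:ℝ) < |f x|} := by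
      simp [hs]
    rw [h0]
    exact (hf.2 1 one_pos).ne
  have hempty : ⋂ k, s k = ∅ := by
    ext x
    simp only [hs, mem_iInter, mem_setOf_eq, mem_empty_iff_false, iff_false, not_forall, not_lt]
    obtain ⟨k, hk⟩ := exists_nat_gt (|f x|)
    exact ⟨k, le_of_lt (hk.trans (lt_add_one _))⟩
  have htend := tendsto_measure_iInter_atTop hmeas hanti hfin
  rw [hempty] at htend
  simp only [measure_empty] at htend
  have : ∀ᶠ k in Filter.atTop, volume (s k) < u :=
    htend.eventually_lt_const hu
  obtain ⟨k, hk⟩ := this.exists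
  exact ⟨(k : ℝ) + 1, by positivity, hk⟩

lemma rearr_nonneg (u : ℝ) : 0 ≤ rearr f u :=
  Real.sInf_nonneg fun _ hy => hy.1.le

lemma rearr_set_nonempty (hf : MemS0 f) {u : ℝ} (hu : 0 < u) :
    {y : ℝ | 0 < y ∧ volume {x | y < |f x|} < ENNReal.ofReal u}.Nonempty := by
  obtain ⟨y, hy0, hy⟩ := exists_dist_lt hf (ENNReal.ofReal_pos.2 hu)
  exact ⟨y, hy0, hy⟩

lemma le_rearr (hf : MemS0 f) {u y : ℝ} (hu : 0 < u) (hy : 0 < y)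
    (h : ENNReal.ofReal u ≤ volume {x | y < |f x|}) : y ≤ rearr f u := by
  refine le_csInf (rearr_set_nonempty hf hu) fun z hz => ?_
  by_contra hzy
  push_neg at hzy
  exact lt_irrefl _ (lt_of_le_of_lt (h.trans (dist_antitone hzy.le)) hz.2)

lemma rearr_anti (hf : MemS0 f) {u v : ℝ} (hu : 0 < u) (huv : u ≤ v) :
    rearr f v ≤ rearr f u := by
  refine csInf_le_csInf ⟨0, fun z hz => hz.1.le⟩ (rearr_set_nonempty hf hu) fun z hz =>
    ⟨hz.1, lt_of_lt_of_le hz.2 (ENNReal.ofReal_le_ofReal huv)⟩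

lemma rearr_antitoneOn (hf : MemS0 f) : AntitoneOn (rearr f) (Ioi (0:ℝ)) :=
  fun u hu _ _ huv => rearr_anti hf hu huv

/-- `λ_f(f^*(t)) ≤ t`. -/
lemma vol_gt_rearr (hf : MemS0 f) {t : ℝ} (ht : 0 < t) :
    volume {x | rearr f t < |f x|} ≤ ENNReal.ofReal t := by
  have hnon := rearr_set_nonempty hf ht
  have hunion : {x : EuclideanSpace ℝ (Fin n) | rearr f t < |f x|}
      = ⋃ k : ℕ, {x | rearr f t + 1 / ((k : ℝ) + 1) < |f x|} := by
    ext x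
    simp only [mem_setOf_eq, mem_iUnion]
    constructor
    · intro hx
      obtain ⟨k, hk⟩ := exists_nat_one_div_lt (sub_pos.2 hx)
      exact ⟨k, by linarith⟩
    · rintro ⟨k, hk⟩
      have : (0:ℝ) < 1 / ((k:ℝ)+1) := by positivity
      linarith
  rw [hunion]
  have hmono : Monotone fun k : ℕ => {x : EuclideanSpace ℝ (Fin n) |
      rearr f t + 1 / ((k : ℝ) + 1) < |f x|} := by
    intro k l hkl x hx
    have h1 : (1:ℝ) / ((l:ℝ)+1) ≤ 1 / ((k:ℝ)+1) := by
      apply one_div_le_one_div_of_le (by positivity)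
      have : (k:ℝ) ≤ l := Nat.cast_le.2 hkl
      linarith
    have hx' : rearr f t + 1 / ((k:ℝ)+1) < |f x| := hx
    show rearr f t + 1 / ((l:ℝ)+1) < |f x|
    linarith
  rw [hmono.measure_iUnion]
  refine iSup_le fun k => ?_
  have hkpos : (0:ℝ) < 1 / ((k:ℝ)+1) := by positivity
  have : sInf {y : ℝ | 0 < y ∧ volume {x | y < |f x|} < ENNReal.ofReal t}
      < rearr f t + 1 / ((k:ℝ)+1) := lt_add_of_le_of_pos le_rfl hkpos
  obtain ⟨z, hz, hzlt⟩ := exists_lt_of_csInf_lt hnon this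
  exact le_of_lt (lt_of_le_of_lt (dist_antitone hzlt.le) hz.2)

/-- **Hardy–Littlewood rearrangement inequality** for sets of measure at most `a`. -/
lemma hardy_littlewood (hf : MemS0 f) {A : Set (EuclideanSpace ℝ (Fin n))}
    (hA : MeasurableSet A) {a : ℝ} (ha : 0 < a) (hAa : volume A ≤ ENNReal.ofReal a) :
    ∫⁻ x in A, ENNReal.ofReal |f x| ≤ ∫⁻ u in Ioc (0:ℝ) a, ENNReal.ofReal (rearr f u) := by
  have hfm : Measurable f := hf.1
  rw [lintegral_eq_lintegral_meas_lt _ (Filter.Eventually.of_forall fun x => abs_nonneg (f x))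
      hfm.abs.aemeasurable,
    lintegral_eq_lintegral_meas_lt _ (Filter.Eventually.of_forall fun u => rearr_nonneg u)
      (aemeasurable_restrict_of_antitoneOn measurableSet_Ioc
        ((rearr_antitoneOn hf).mono Ioc_subset_Ioi_self))]
  refine lintegral_mono_ae ((ae_restrict_iff' measurableSet_Ioi).2
    (Filter.Eventually.of_forall fun y hy => ?_))
  have hy : (0:ℝ) < y := hy
  rw [Measure.restrict_apply (measurableSet_dist hfm y),
    Measure.restrict_apply' measurableSet_Ioc]
  -- key estimate for shifted levels
  have key : ∀ k : ℕ, volume ({x | y + 1/((k:ℝ)+1) < |f x|} ∩ A)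
      ≤ volume ({u : ℝ | y < rearr f u} ∩ Ioc 0 a) := by
    intro k
    obtain ⟨y', hy'⟩ : ∃ y', y' = y + 1/((k:ℝ)+1) := ⟨_, rfl⟩
    have hk1 : (0:ℝ) < 1/((k:ℝ)+1) := by positivity
    have hy'0 : 0 < y' := by rw [hy']; positivity
    have hyy' : y < y' := by rw [hy']; linarith
    rw [← hy']
    have hL : volume {x | y' < |f x|} < ∞ := hf.2 y' hy'0
    set L := volume {x | y' < |f x|} with hLdef
    set m := min a L.toReal with hm
    have hsub : Ioc (0:ℝ) m ⊆ {u : ℝ | y < rearr f u} ∩ Ioc 0 a := by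
      rintro u ⟨hu0, hum⟩
      refine ⟨?_, hu0, hum.trans (min_le_left _ _)⟩
      have h1 : ENNReal.ofReal u ≤ L := by
        rw [← ENNReal.ofReal_toReal hL.ne]
        exact ENNReal.ofReal_le_ofReal (hum.trans (min_le_right _ _))
      exact lt_of_lt_of_le hyy' (le_rearr hf hu0 hy'0 h1)
    have hmin : volume ({x | y' < |f x|} ∩ A) ≤ min (ENNReal.ofReal a) L :=
      le_min (le_trans (measure_mono inter_subset_right) hAa)
        (measure_mono inter_subset_left)
    refine le_trans hmin ?_
    have hIocvol : volume (Ioc (0:ℝ) m) = min (ENNReal.ofReal a) L := by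
      rw [Real.volume_Ioc, sub_zero, hm]
      have hmono : Monotone ENNReal.ofReal := fun _ _ h => ENNReal.ofReal_le_ofReal h
      rw [hmono.map_min, ENNReal.ofReal_toReal hL.ne]
    rw [← hIocvol]
    exact measure_mono hsub
  have hunion : {x : EuclideanSpace ℝ (Fin n) | y < |f x|} ∩ A
      = ⋃ k : ℕ, ({x | y + 1/((k:ℝ)+1) < |f x|} ∩ A) := by
    ext x
    simp only [mem_inter_iff, mem_iUnion, mem_setOf_eq]
    constructor
    · rintro ⟨hx, hxA⟩
      obtain ⟨k, hk⟩ := exists_nat_one_div_lt (sub_pos.2 hx)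
      exact ⟨k, ⟨by linarith, hxA⟩⟩
    · rintro ⟨k, hk, hxA⟩
      have : (0:ℝ) < 1/((k:ℝ)+1) := by positivity
      exact ⟨by linarith, hxA⟩
  rw [hunion]
  have hmono : Monotone fun k : ℕ =>
      ({x : EuclideanSpace ℝ (Fin n) | y + 1/((k:ℝ)+1) < |f x|} ∩ A) := by
    intro k l hkl x hx
    have h1 : (1:ℝ) / ((l:ℝ)+1) ≤ 1 / ((k:ℝ)+1) := by
      apply one_div_le_one_div_of_le (by positivity)
      have : (k:ℝ) ≤ l := Nat.cast_le.2 hkl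
      linarith
    have hx1 : y + 1 / ((k:ℝ)+1) < |f x| := hx.1
    exact ⟨show y + 1 / ((l:ℝ)+1) < |f x| by linarith, hx.2⟩
  rw [hmono.measure_iUnion]
  exact iSup_le key

/-- If `f^{**}(t) = 0` then `f = 0` a.e. -/
lemma ae_zero_of_rearr2_zero (hf : MemS0 f) {t : ℝ} (ht : 0 < t)
    (h : rearr2 f t = 0) : f =ᵐ[volume] 0 := by
  have ht' : ENNReal.ofReal t ≠ 0 := (ENNReal.ofReal_pos.2 ht).ne'
  have hI : ∫⁻ u in Ioc (0:ℝ) t, ENNReal.ofReal (rearr f u) = 0 := by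
    rcases mul_eq_zero.1 h with h' | h'
    · exact absurd h' (by simp [ht'])
    · exact h'
  have hae : ∀ᵐ u ∂(volume.restrict (Ioc (0:ℝ) t)), ENNReal.ofReal (rearr f u) = 0 := by
    have := (lintegral_eq_zero_iff' ((ENNReal.measurable_ofReal).comp_aemeasurable
      (aemeasurable_restrict_of_antitoneOn measurableSet_Ioc
        ((rearr_antitoneOn hf).mono Ioc_subset_Ioi_self)))).1 hI
    exact this.mono fun u hu => hu
  -- for every small δ there is u ≤ δ with rearr f u = 0
  have hsmall : ∀ δ : ℝ, 0 < δ → δ ≤ t → ∃ u : ℝ, 0 < u ∧ u ≤ δ ∧ rearr f u ≤ 0 := by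
    intro δ hδ hδt
    by_contra hcon
    push_neg at hcon
    have hsub : Ioc (0:ℝ) δ ⊆ {u : ℝ | ¬ ENNReal.ofReal (rearr f u) = 0} ∩ Ioc 0 t := by
      rintro u ⟨hu0, huδ⟩
      refine ⟨?_, hu0, huδ.trans hδt⟩
      simp only [mem_setOf_eq, ENNReal.ofReal_eq_zero, not_le]
      exact hcon u hu0 huδ
    have h0 : volume ({u : ℝ | ¬ ENNReal.ofReal (rearr f u) = 0} ∩ Ioc 0 t) = 0 := by
      have := ae_iff.1 hae
      rwa [Measure.restrict_apply' measurableSet_Ioc] at this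
    have : volume (Ioc (0:ℝ) δ) = 0 :=
      le_antisymm (h0 ▸ measure_mono hsub) zero_le
    rw [Real.volume_Ioc, sub_zero] at this
    exact absurd this (by simp [hδ, ENNReal.ofReal_eq_zero, not_le])
  -- hence the distribution function vanishes for every positive level
  have hdist : ∀ y : ℝ, 0 < y → volume {x | y < |f x|} = 0 := by
    intro y hy
    have hbound : ∀ k : ℕ, volume {x | y < |f x|} ≤ ENNReal.ofReal (min t (1/((k:ℝ)+1))) := by
      intro k
      have hδ : (0:ℝ) < min t (1/((k:ℝ)+1)) := lt_min ht (by positivity)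
      obtain ⟨u, hu0, huδ, hru⟩ := hsmall _ hδ (min_le_left _ _)
      have hnon := rearr_set_nonempty hf hu0
      have : sInf {z : ℝ | 0 < z ∧ volume {x | z < |f x|} < ENNReal.ofReal u} < y :=
        lt_of_le_of_lt hru hy
      obtain ⟨z, hz, hzy⟩ := exists_lt_of_csInf_lt hnon this
      calc volume {x | y < |f x|} ≤ volume {x | z < |f x|} := dist_antitone hzy.le
        _ ≤ ENNReal.ofReal u := hz.2.le
        _ ≤ _ := ENNReal.ofReal_le_ofReal huδ
    have htendk : Filter.Tendsto (fun k : ℕ => ENNReal.ofReal (min t (1/((k:ℝ)+1))))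
        Filter.atTop (nhds 0) := by
      have h1 : Filter.Tendsto (fun k : ℕ => 1/((k:ℝ)+1)) Filter.atTop (nhds 0) :=
        tendsto_one_div_add_atTop_nhds_zero_nat
      have h2 : Filter.Tendsto (fun k : ℕ => min t (1/((k:ℝ)+1))) Filter.atTop (nhds 0) :=
        squeeze_zero (fun k => le_min ht.le (by positivity)) (fun k => min_le_right _ _) h1
      simpa using ENNReal.tendsto_ofReal h2
    exact le_antisymm (ge_of_tendsto' htendk hbound) zero_le
  -- conclude
  have : volume {x | ¬ f x = 0} = 0 := by
    have hunion : {x : EuclideanSpace ℝ (Fin n) | ¬ f x = 0}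
        = ⋃ k : ℕ, {x | 1/((k:ℝ)+1) < |f x|} := by
      ext x
      simp only [mem_setOf_eq, mem_iUnion]
      constructor
      · intro hx
        obtain ⟨k, hk⟩ := exists_nat_one_div_lt (abs_pos.2 hx)
        exact ⟨k, hk⟩
      · rintro ⟨k, hk⟩
        intro h0
        rw [h0, abs_zero] at hk
        have : (0:ℝ) < 1/((k:ℝ)+1) := by positivity
        linarith
    rw [hunion]
    refine le_antisymm (le_trans (measure_iUnion_le _) ?_) zero_le
    have h0 : ∀ k : ℕ, volume {x : EuclideanSpace ℝ (Fin n) | 1/((k:ℝ)+1) < |f x|} = 0 :=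
      fun k => hdist _ (by positivity)
    simp only [h0, tsum_zero, le_refl]
  exact ae_iff.2 this

end Aux

/-- **Cianchi–Kerman–Opic–Pick rearrangement estimate for the fractional maximal
function.** Let `0 < α < n`. There is `C > 0` depending only on `n` and `α` such that
for every `f ∈ S₀(ℝⁿ)` and every `t > 0`,
`(M_α f)*(t) ≤ C sup_{t ≤ s < ∞} s^(α/n) f**(s)`. -/
theorem ckop_fractional_maximal_rearrangement (n : ℕ) (hn : 0 < n) (α : ℝ)
    (hα0 : 0 < α) (hαn : α < n) :
    ∃ C : ℝ, 0 < C ∧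
      ∀ f : EuclideanSpace ℝ (Fin n) → ℝ, MemS0 f →
        ∀ t : ℝ, 0 < t →
          rearrE (fracMaximalFn α f) t
            ≤ ENNReal.ofReal C *
                ⨆ s ∈ Ici t, ENNReal.ofReal (s ^ (α / n)) * rearr2 f s := by
  classical
  have hn' : (0:ℝ) < n := Nat.cast_pos.2 hn
  have hβ : 0 < α / (n:ℝ) := div_pos hα0 hn'
  refine ⟨2 + 2 * 4 ^ n, by positivity, ?_⟩
  intro f hf t ht
  have hfm : Measurable f := hf.1
  set S := ⨆ s ∈ Ici t, ENNReal.ofReal (s ^ (α / (n:ℝ))) * rearr2 f s with hSdef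
  have hCeq : ENNReal.ofReal (2 + 2 * 4 ^ n) = 2 + 2 * (4:ℝ≥0∞) ^ n := by
    rw [ENNReal.ofReal_add (by norm_num) (by positivity), ENNReal.ofReal_mul (by norm_num),
      ENNReal.ofReal_pow (by norm_num)]
    norm_num
  -- trivial case `f** (t) = 0`
  by_cases hD0 : rearr2 f t = 0
  · have hf0 : f =ᵐ[volume] 0 := ae_zero_of_rearr2_zero hf ht hD0
    have hM : ∀ x, fracMaximalFn α f x = 0 := by
      intro x
      rw [fracMaximalFn]
      refine le_antisymm (iSup₂_le fun r _ => ?_) zero_le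
      have h0 : ∫⁻ y in ball x r, ENNReal.ofReal |f y| = 0 := by
        have hae : ∀ᵐ y ∂(volume.restrict (ball x r)),
            ENNReal.ofReal |f y| = (0:ℝ≥0∞) :=
          ae_restrict_of_ae (hf0.mono fun y hy => by simp [hy])
        rw [lintegral_congr_ae hae, lintegral_zero]
      rw [h0, mul_zero]
    have hzero : rearrE (fracMaximalFn α f) t = 0 := by
      rw [rearrE]
      have hset : {y : ℝ≥0∞ | 0 < y ∧ volume {x | y < fracMaximalFn α f x} < ENNReal.ofReal t}
          = {y : ℝ≥0∞ | 0 < y} := by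
        ext y
        simp only [mem_setOf_eq, and_iff_left_iff_imp]
        intro _
        have hemp : {x : EuclideanSpace ℝ (Fin n) | y < fracMaximalFn α f x} = ∅ := by
          ext x; simp [hM x]
        rw [hemp]
        simpa [measure_empty] using ENNReal.ofReal_pos.2 ht
      rw [hset]
      refine le_antisymm ?_ zero_le
      by_contra hpos
      push_neg at hpos
      obtain ⟨ε, hε0, hεlt⟩ := exists_between hpos
      exact absurd (sInf_le (show ε ∈ {y : ℝ≥0∞ | 0 < y} from hε0)) (not_le.2 hεlt)
    rw [hzero]
    exact zero_le
  -- trivial case `S = ∞`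
  by_cases hStop : S = ⊤
  · rw [hStop, ENNReal.mul_top
      ((ENNReal.ofReal_pos.2 (by positivity : (0:ℝ) < 2 + 2 * 4 ^ n)).ne')]
    exact le_top
  -- main case
  have httop : ENNReal.ofReal t ≠ ⊤ := ENNReal.ofReal_ne_top
  have ht0' : ENNReal.ofReal t ≠ 0 := (ENNReal.ofReal_pos.2 ht).ne'
  set D := rearr2 f t with hDdef
  set I := ∫⁻ u in Ioc (0:ℝ) t, ENNReal.ofReal (rearr f u) with hIdef
  have hIeq : ENNReal.ofReal t * D = I := by
    rw [hDdef, rearr2, ← hIdef, ← mul_assoc, ENNReal.mul_inv_cancel ht0' httop, one_mul]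
  have htα : (0:ℝ) < t ^ (α / (n:ℝ)) := Real.rpow_pos_of_pos ht _
  have hPt0 : ENNReal.ofReal (t ^ (α / (n:ℝ))) ≠ 0 := (ENNReal.ofReal_pos.2 htα).ne'
  have hPttop : ENNReal.ofReal (t ^ (α / (n:ℝ))) ≠ ⊤ := ENNReal.ofReal_ne_top
  have htS : ENNReal.ofReal (t ^ (α / (n:ℝ))) * D ≤ S := by
    rw [hSdef]
    exact le_biSup (fun s => ENNReal.ofReal (s ^ (α / (n:ℝ))) * rearr2 f s) (mem_Ici.2 le_rfl)
  have hDtop : D ≠ ⊤ := by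
    intro h
    apply hStop
    refine top_le_iff.1 ?_
    calc (⊤:ℝ≥0∞) = ENNReal.ofReal (t ^ (α / (n:ℝ))) * D := by
          rw [h, ENNReal.mul_top hPt0]
      _ ≤ S := htS
  have hS0 : S ≠ 0 := by
    intro h
    apply hD0
    have h2 := htS
    rw [h, le_zero_iff] at h2
    exact (mul_eq_zero.1 h2).resolve_left hPt0
  have hItop : I ≠ ⊤ := by
    rw [← hIeq]
    exact ENNReal.mul_ne_top httop hDtop
  -- the truncation
  set b := rearr f t with hbdef
  set f₁ : EuclideanSpace ℝ (Fin n) → ℝ := fun x => if b < |f x| then |f x| else 0 with hf₁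
  set A := {x : EuclideanSpace ℝ (Fin n) | b < |f x|} with hAdef
  have hA : MeasurableSet A := measurableSet_dist hfm b
  have hAvol : volume A ≤ ENNReal.ofReal t := vol_gt_rearr hf ht
  have hf₁ind : (fun x => ENNReal.ofReal (f₁ x))
      = A.indicator fun x => ENNReal.ofReal |f x| := by
    funext x
    by_cases h : b < |f x| <;> simp [hf₁, indicator, hAdef, h]
  have hf₁I : ∫⁻ x, ENNReal.ofReal (f₁ x) ≤ I := by
    rw [hf₁ind, lintegral_indicator hA]
    exact hardy_littlewood hf hA ht hAvol
  have hbD : ENNReal.ofReal b ≤ D := by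
    have hIb : ENNReal.ofReal b * ENNReal.ofReal t ≤ I := by
      rw [hIdef]
      calc ENNReal.ofReal b * ENNReal.ofReal t
          = ∫⁻ _ in Ioc (0:ℝ) t, ENNReal.ofReal b := by
            rw [setLIntegral_const, Real.volume_Ioc, sub_zero]
        _ ≤ _ := by
            refine lintegral_mono_ae ((ae_restrict_iff' measurableSet_Ioc).2
              (Filter.Eventually.of_forall fun u hu => ?_))
            exact ENNReal.ofReal_le_ofReal (rearr_anti hf hu.1 hu.2)
    rw [hDdef, rearr2, ← hIdef]
    calc ENNReal.ofReal b
        = (ENNReal.ofReal t)⁻¹ * (ENNReal.ofReal b * ENNReal.ofReal t) := by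
          rw [mul_comm (ENNReal.ofReal b), ← mul_assoc,
            ENNReal.inv_mul_cancel ht0' httop, one_mul]
      _ ≤ _ := mul_le_mul_right hIb _
  have hballpos : ∀ (x : EuclideanSpace ℝ (Fin n)) {r : ℝ}, 0 < r →
      volume (ball x r) ≠ 0 := fun x {r} hr => (measure_ball_pos volume x hr).ne'
  have hballtop : ∀ (x : EuclideanSpace ℝ (Fin n)) (r : ℝ), volume (ball x r) ≠ ⊤ :=
    fun _ _ => measure_ball_lt_top.ne
  -- large balls
  have hlarge : ∀ (x : EuclideanSpace ℝ (Fin n)) (r : ℝ), 0 < r →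
      ENNReal.ofReal t ≤ volume (ball x r) →
      volume (ball x r) ^ (α / (n:ℝ) - 1) * ∫⁻ y in ball x r, ENNReal.ofReal |f y| ≤ S := by
    intro x r hr hrt
    have hBtop : volume (ball x r) ≠ ⊤ := hballtop x r
    have hst : t ≤ (volume (ball x r)).toReal :=
      (ENNReal.ofReal_le_iff_le_toReal hBtop).1 hrt
    have hs0 : 0 < (volume (ball x r)).toReal := lt_of_lt_of_le ht hst
    have hBs : volume (ball x r) = ENNReal.ofReal ((volume (ball x r)).toReal) :=
      (ENNReal.ofReal_toReal hBtop).symm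
    have h1 : volume (ball x r) ^ (α / (n:ℝ) - 1) * ∫⁻ y in ball x r, ENNReal.ofReal |f y|
        ≤ ENNReal.ofReal ((volume (ball x r)).toReal ^ (α / (n:ℝ)))
            * rearr2 f ((volume (ball x r)).toReal) := by
      calc volume (ball x r) ^ (α / (n:ℝ) - 1) * ∫⁻ y in ball x r, ENNReal.ofReal |f y|
          ≤ volume (ball x r) ^ (α / (n:ℝ) - 1)
            * ∫⁻ u in Ioc (0:ℝ) ((volume (ball x r)).toReal), ENNReal.ofReal (rearr f u) :=
            mul_le_mul_right (hardy_littlewood hf measurableSet_ball hs0 (le_of_eq hBs)) _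
        _ = _ := by
            rw [rearr2]
            conv_lhs => rw [hBs]
            rw [show α / (n:ℝ) - 1 = α / (n:ℝ) + (-1) by ring,
              ENNReal.rpow_add _ _ (ENNReal.ofReal_pos.2 hs0).ne' ENNReal.ofReal_ne_top,
              ENNReal.rpow_neg_one, ENNReal.ofReal_rpow_of_pos hs0, mul_assoc,
              ENNReal.toReal_ofReal ENNReal.toReal_nonneg]
    refine h1.trans ?_
    rw [hSdef]
    exact le_biSup (fun s => ENNReal.ofReal (s ^ (α / (n:ℝ))) * rearr2 f s) (mem_Ici.2 hst)
  -- small balls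
  have hsmall : ∀ (x : EuclideanSpace ℝ (Fin n)) (r : ℝ), 0 < r →
      volume (ball x r) < ENNReal.ofReal t →
      volume (ball x r) ^ (α / (n:ℝ) - 1) * ∫⁻ y in ball x r, ENNReal.ofReal |f y|
        ≤ S + ENNReal.ofReal (t ^ (α / (n:ℝ)))
            * ((volume (ball x r))⁻¹ * ∫⁻ y in ball x r, ENNReal.ofReal (f₁ y)) := by
    intro x r hr hrt
    have hBtop : volume (ball x r) ≠ ⊤ := hballtop x r
    have hB0 : volume (ball x r) ≠ 0 := hballpos x hr
    have hsplit : ∫⁻ y in ball x r, ENNReal.ofReal |f y|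
        ≤ (∫⁻ y in ball x r, ENNReal.ofReal (f₁ y))
          + volume (ball x r) * ENNReal.ofReal b := by
      calc ∫⁻ y in ball x r, ENNReal.ofReal |f y|
          ≤ ∫⁻ y in ball x r, (ENNReal.ofReal (f₁ y) + ENNReal.ofReal b) := by
            refine lintegral_mono fun y => ?_
            by_cases h : b < |f y|
            · simp only [hf₁, if_pos h]
              exact le_self_add
            · push_neg at h
              exact le_add_left (ENNReal.ofReal_le_ofReal h)
        _ = _ := by
            rw [lintegral_add_right _ measurable_const, setLIntegral_const,
              mul_comm (ENNReal.ofReal b)]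
    have hsplitpow : volume (ball x r) ^ (α / (n:ℝ) - 1)
        = volume (ball x r) ^ (α / (n:ℝ)) * (volume (ball x r))⁻¹ := by
      rw [show α / (n:ℝ) - 1 = α / (n:ℝ) + (-1) by ring,
        ENNReal.rpow_add _ _ hB0 hBtop, ENNReal.rpow_neg_one]
    have hpow : volume (ball x r) ^ (α / (n:ℝ)) ≤ ENNReal.ofReal (t ^ (α / (n:ℝ))) := by
      rw [← ENNReal.ofReal_rpow_of_pos ht]
      exact ENNReal.rpow_le_rpow hrt.le hβ.le
    calc volume (ball x r) ^ (α / (n:ℝ) - 1) * ∫⁻ y in ball x r, ENNReal.ofReal |f y|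
        ≤ volume (ball x r) ^ (α / (n:ℝ) - 1) * ((∫⁻ y in ball x r, ENNReal.ofReal (f₁ y))
            + volume (ball x r) * ENNReal.ofReal b) := mul_le_mul_right hsplit _
      _ = volume (ball x r) ^ (α / (n:ℝ))
            * ((volume (ball x r))⁻¹ * ∫⁻ y in ball x r, ENNReal.ofReal (f₁ y))
          + volume (ball x r) ^ (α / (n:ℝ)) * ENNReal.ofReal b := by
          rw [hsplitpow, mul_add]
          congr 1
          · ring
          · calc volume (ball x r) ^ (α / (n:ℝ)) * (volume (ball x r))⁻¹
                * (volume (ball x r) * ENNReal.ofReal b)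
                = volume (ball x r) ^ (α / (n:ℝ))
                  * ((volume (ball x r))⁻¹ * volume (ball x r)) * ENNReal.ofReal b := by
                  ring
              _ = _ := by rw [ENNReal.inv_mul_cancel hB0 hBtop, mul_one]
      _ ≤ ENNReal.ofReal (t ^ (α / (n:ℝ)))
            * ((volume (ball x r))⁻¹ * ∫⁻ y in ball x r, ENNReal.ofReal (f₁ y))
          + ENNReal.ofReal (t ^ (α / (n:ℝ))) * ENNReal.ofReal b := by
          exact add_le_add (mul_le_mul_left hpow _) (mul_le_mul_left hpow _)
      _ ≤ ENNReal.ofReal (t ^ (α / (n:ℝ)))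
            * ((volume (ball x r))⁻¹ * ∫⁻ y in ball x r, ENNReal.ofReal (f₁ y)) + S := by
          refine add_le_add_right ?_ _
          exact le_trans (mul_le_mul_right hbD _) htS
      _ = _ := add_comm _ _
  -- the exceptional set
  set lam : ℝ≥0∞ := 2 * (4:ℝ≥0∞) ^ n * D with hlam
  have h4n0 : ((4:ℝ≥0∞) ^ n) ≠ 0 := by positivity
  have h4ntop : ((4:ℝ≥0∞) ^ n) ≠ ⊤ := by
    exact ENNReal.pow_ne_top (by norm_num)
  have hlam0 : lam ≠ 0 := by
    rw [hlam]
    exact mul_ne_zero (mul_ne_zero two_ne_zero h4n0) hD0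
  have hlamtop : lam ≠ ⊤ := by
    rw [hlam]
    exact ENNReal.mul_ne_top (ENNReal.mul_ne_top (by norm_num) h4ntop) hDtop
  set G := {x : EuclideanSpace ℝ (Fin n) | ∃ r : ℝ, 0 < r ∧
      lam * volume (ball x r) < ∫⁻ y in ball x r, ENNReal.ofReal (f₁ y)} with hGdef
  set y₀ := 2 * S + ENNReal.ofReal (t ^ (α / (n:ℝ))) * lam with hy₀
  have hy₀pos : 0 < y₀ := by
    rw [hy₀]
    exact lt_of_lt_of_le (ENNReal.mul_pos two_ne_zero hS0) le_self_add
  have hSy₀ : S < y₀ := by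
    rw [hy₀, two_mul]
    exact lt_of_lt_of_le (ENNReal.lt_add_right hStop hS0) le_self_add
  have hGsub : {x | y₀ < fracMaximalFn α f x} ⊆ G := by
    intro x hx
    simp only [mem_setOf_eq, fracMaximalFn, lt_iSup_iff, mem_Ioi] at hx
    obtain ⟨r, hr, hx⟩ := hx
    rcases le_or_gt (ENNReal.ofReal t) (volume (ball x r)) with hcase | hcase
    · exact absurd (hSy₀.trans (lt_of_lt_of_le hx (hlarge x r hr hcase))) (lt_irrefl _)
    · have hxx := lt_of_lt_of_le hx (hsmall x r hr hcase)
      rw [hy₀, two_mul, add_assoc] at hxx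
      have h4 := (ENNReal.add_lt_add_iff_left hStop).1 hxx
      have h5 : ENNReal.ofReal (t ^ (α / (n:ℝ))) * lam
          < ENNReal.ofReal (t ^ (α / (n:ℝ)))
            * ((volume (ball x r))⁻¹ * ∫⁻ y in ball x r, ENNReal.ofReal (f₁ y)) :=
        lt_of_le_of_lt le_add_self h4
      have h6 := (ENNReal.mul_lt_mul_iff_right hPt0 hPttop).1 h5
      refine ⟨r, hr, ?_⟩
      calc lam * volume (ball x r) = volume (ball x r) * lam := mul_comm _ _
        _ < volume (ball x r)
            * ((volume (ball x r))⁻¹ * ∫⁻ y in ball x r, ENNReal.ofReal (f₁ y)) :=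
            (ENNReal.mul_lt_mul_iff_right (hballpos x hr) (hballtop x r)).2 h6
        _ = _ := by
            rw [← mul_assoc, ENNReal.mul_inv_cancel (hballpos x hr) (hballtop x r), one_mul]
  -- weak type bound via Vitali covering
  have hGvol : volume G < ENNReal.ofReal t := by
    have hchoice : ∀ x : EuclideanSpace ℝ (Fin n), ∃ r : ℝ, (x ∈ G → 0 < r ∧
        lam * volume (ball x r) < ∫⁻ y in ball x r, ENNReal.ofReal (f₁ y)) := by
      intro x
      by_cases hx : x ∈ G
      · obtain ⟨r, h1, h2⟩ := hx
        exact ⟨r, fun _ => ⟨h1, h2⟩⟩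
      · exact ⟨1, fun h => absurd h hx⟩
    choose ρ hρspec using hchoice
    have hc0 : volume (ball (0 : EuclideanSpace ℝ (Fin n)) 1) ≠ 0 := hballpos _ one_pos
    have hctop : volume (ball (0 : EuclideanSpace ℝ (Fin n)) 1) ≠ ⊤ := hballtop _ 1
    set V := I / lam / volume (ball (0 : EuclideanSpace ℝ (Fin n)) 1) with hV
    have hVtop : V ≠ ⊤ :=
      (ENNReal.div_lt_top (ENNReal.div_lt_top hItop hlam0).ne hc0).ne
    have hρle : ∀ x ∈ G, ρ x ≤ max 1 V.toReal := by
      intro x hx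
      obtain ⟨hρx, hlt⟩ := hρspec x hx
      have hvle : volume (ball x (ρ x)) ≤ I / lam := by
        rw [ENNReal.le_div_iff_mul_le (Or.inl hlam0) (Or.inl hlamtop), mul_comm]
        exact le_trans hlt.le (le_trans (lintegral_mono' Measure.restrict_le_self le_rfl) hf₁I)
      have hballeq : volume (ball x (ρ x))
          = ENNReal.ofReal (ρ x ^ n) * volume (ball (0 : EuclideanSpace ℝ (Fin n)) 1) := by
        rw [Measure.addHaar_ball_of_pos volume x hρx, finrank_euclideanSpace_fin]
      have hple : ENNReal.ofReal (ρ x ^ n) ≤ V := by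
        rw [hV, ENNReal.le_div_iff_mul_le (Or.inl hc0) (Or.inl hctop), ← hballeq]
        exact hvle
      have hple' : ρ x ^ n ≤ V.toReal := (ENNReal.ofReal_le_iff_le_toReal hVtop).1 hple
      by_cases h1 : ρ x ≤ 1
      · exact le_trans h1 (le_max_left _ _)
      · push_neg at h1
        exact le_trans ((le_self_pow₀ h1.le hn.ne').trans hple') (le_max_right _ _)
    obtain ⟨u, huG, hdisj, hcover⟩ :=
      Vitali.exists_disjoint_subfamily_covering_enlargement_closedBall G id ρ
        (max 1 V.toReal) hρle 4 (by norm_num)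
    have hucnt : u.Countable := by
      have hdisj' : Pairwise (Function.onFun Disjoint
          fun b : u => closedBall (b : EuclideanSpace ℝ (Fin n)) (ρ b)) := by
        rintro b1 b2 hne
        exact hdisj b1.2 b2.2 fun h => hne (Subtype.ext h)
      have hcnt := Measure.countable_meas_pos_of_disjoint_iUnion (μ := volume)
        (fun b : u => measurableSet_closedBall) hdisj'
      have huniv : {i : u |
          0 < volume (closedBall (i : EuclideanSpace ℝ (Fin n)) (ρ i))} = univ := by
        refine eq_univ_of_forall fun i => ?_
        exact measure_closedBall_pos volume _ (hρspec i (huG i.2)).1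
      rw [huniv, Set.countable_univ_iff] at hcnt
      exact Set.countable_coe_iff.1 hcnt
    haveI := hucnt.to_subtype
    have hGcover : G ⊆ ⋃ b ∈ u, closedBall b (4 * ρ b) := by
      intro x hx
      obtain ⟨c, hc, hsubc⟩ := hcover x hx
      exact mem_biUnion hc (hsubc (mem_closedBall_self (hρspec x hx).1.le))
    have hterm : ∀ c : u, volume (closedBall (c : EuclideanSpace ℝ (Fin n)) (4 * ρ c))
        ≤ (4:ℝ≥0∞) ^ n * (lam⁻¹ * ∫⁻ y in ball (c : EuclideanSpace ℝ (Fin n)) (ρ (c : EuclideanSpace ℝ (Fin n))), ENNReal.ofReal (f₁ y)) := by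
      rintro ⟨c, hcu⟩
      have hρc := (hρspec c (huG hcu)).1
      have h4 : volume (closedBall c (4 * ρ c))
          = ENNReal.ofReal ((4:ℝ) ^ n)
            * volume (closedBall (0 : EuclideanSpace ℝ (Fin n)) (ρ c)) := by
        rw [Measure.addHaar_closedBall_mul_of_pos volume c (by norm_num : (0:ℝ) < 4),
          finrank_euclideanSpace_fin]
      have hcbeq : volume (closedBall (0 : EuclideanSpace ℝ (Fin n)) (ρ c))
          = volume (ball c (ρ c)) := by
        rw [Measure.addHaar_closedBall volume _ hρc.le,
          Measure.addHaar_ball_of_pos volume c hρc]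
      have hball_le : volume (ball c (ρ c))
          ≤ lam⁻¹ * ∫⁻ y in ball c (ρ c), ENNReal.ofReal (f₁ y) := by
        calc volume (ball c (ρ c)) = lam⁻¹ * (lam * volume (ball c (ρ c))) := by
              rw [← mul_assoc, ENNReal.inv_mul_cancel hlam0 hlamtop, one_mul]
          _ ≤ _ := mul_le_mul_right (hρspec c (huG hcu)).2.le _
      calc volume (closedBall c (4 * ρ c))
          = ENNReal.ofReal ((4:ℝ) ^ n) * volume (ball c (ρ c)) := by rw [h4, hcbeq]
        _ ≤ ENNReal.ofReal ((4:ℝ) ^ n)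
            * (lam⁻¹ * ∫⁻ y in ball c (ρ c), ENNReal.ofReal (f₁ y)) :=
            mul_le_mul_right hball_le _
        _ = _ := by rw [ENNReal.ofReal_pow (by norm_num), ENNReal.ofReal_ofNat]
    have hdisjball : Pairwise (Function.onFun Disjoint
        fun c : u => ball (c : EuclideanSpace ℝ (Fin n)) (ρ c)) := by
      rintro c1 c2 hne
      exact Disjoint.mono ball_subset_closedBall ball_subset_closedBall
        (hdisj c1.2 c2.2 fun h => hne (Subtype.ext h))
    have hsumint : ∑' c : u, ∫⁻ y in ball (c : EuclideanSpace ℝ (Fin n)) (ρ c),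
        ENNReal.ofReal (f₁ y) ≤ I := by
      rw [← lintegral_iUnion (fun c : u => measurableSet_ball) hdisjball]
      exact le_trans (lintegral_mono' Measure.restrict_le_self le_rfl) hf₁I
    calc volume G
        ≤ ∑' c : u, volume (closedBall (c : EuclideanSpace ℝ (Fin n)) (4 * ρ c)) :=
          le_trans (measure_mono hGcover) (measure_biUnion_le volume hucnt _)
      _ ≤ ∑' c : u, (4:ℝ≥0∞) ^ n * (lam⁻¹ * ∫⁻ y in ball (c : EuclideanSpace ℝ (Fin n)) (ρ c),
            ENNReal.ofReal (f₁ y)) := ENNReal.tsum_le_tsum hterm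
      _ = (4:ℝ≥0∞) ^ n * lam⁻¹ * ∑' c : u, ∫⁻ y in ball (c : EuclideanSpace ℝ (Fin n)) (ρ c),
            ENNReal.ofReal (f₁ y) := by
          simp_rw [← mul_assoc]
          rw [ENNReal.tsum_mul_left]
      _ ≤ (4:ℝ≥0∞) ^ n * lam⁻¹ * I := mul_le_mul_right hsumint _
      _ = (4:ℝ≥0∞) ^ n * ((4:ℝ≥0∞) ^ n)⁻¹ * (D⁻¹ * D) * (2⁻¹ * ENNReal.ofReal t) := by
          rw [hlam, ← hIeq, ENNReal.mul_inv (Or.inl (mul_ne_zero two_ne_zero h4n0))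
            (Or.inl (ENNReal.mul_ne_top (by norm_num) h4ntop)),
            ENNReal.mul_inv (Or.inl (two_ne_zero)) (Or.inl (by norm_num))]
          ring
      _ = 2⁻¹ * ENNReal.ofReal t := by
          rw [ENNReal.mul_inv_cancel h4n0 h4ntop, ENNReal.inv_mul_cancel hD0 hDtop,
            one_mul, one_mul]
      _ < ENNReal.ofReal t := by
          rw [← ENNReal.div_eq_inv_mul]
          exact ENNReal.half_lt_self ht0' httop
  -- conclusion
  have hy₀mem : y₀ ∈ {y : ℝ≥0∞ |
      0 < y ∧ volume {x | y < fracMaximalFn α f x} < ENNReal.ofReal t} :=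
    ⟨hy₀pos, lt_of_le_of_lt (measure_mono hGsub) hGvol⟩
  have h1 : rearrE (fracMaximalFn α f) t ≤ y₀ := sInf_le hy₀mem
  refine h1.trans ?_
  rw [hCeq, hy₀, hlam]
  calc 2 * S + ENNReal.ofReal (t ^ (α / (n:ℝ))) * (2 * (4:ℝ≥0∞) ^ n * D)
      = 2 * S + 2 * (4:ℝ≥0∞) ^ n * (ENNReal.ofReal (t ^ (α / (n:ℝ))) * D) := by ring
    _ ≤ 2 * S + 2 * (4:ℝ≥0∞) ^ n * S := add_le_add_right (mul_le_mul_right htS _) _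
    _ = (2 + 2 * (4:ℝ≥0∞) ^ n) * S := by ring
end
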